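/- Let μ, ν, ρ be finite nonempty sets and consider functions f_a : ν × ρ → Fin 2, f_b : ρ × μ → Fin 2, f_c : μ × ν → Fin 2 (the triangle structure). Define the observed triple for (m, n, r) ∈ μ × ν × ρ as (f_a(n, r), f_b(r, m), f_c(m, n)). Then the image of the observation map cannot equal {(1,0,0), (0,1,0), (0,0,1)}. -/
import Mathlib


/-- The one-hot support `{(1,0,0),(0,1,0),(0,0,1)}` is
possibilistically incompatible with the triangle causal structure. -/
theorem triangle_one_hot_incompatible
    {μ ν ρ : Type*} [Fintype μ] [Fintype ν] [Fintype ρ]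
    [Nonempty μ] [Nonempty ν] [Nonempty ρ]
    (f_a : ν × ρ → Fin 2) (f_b : ρ × μ → Fin 2) (f_c : μ × ν → Fin 2) :
    Set.range (fun t : μ × ν × ρ =>
        (f_a (t.2.1, t.2.2), f_b (t.2.2, t.1), f_c (t.1, t.2.1)))
      ≠ ({((1 : Fin 2), (0 : Fin 2), (0 : Fin 2)), (0, 1, 0), (0, 0, 1)} :
          Set (Fin 2 × Fin 2 × Fin 2)) := by
  intro h
  have hS : ∀ m n r, f_a (n, r) = 1 ∧ f_b (r, m) = 0 ∧ f_c (m, n) = 0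
      ∨ f_a (n, r) = 0 ∧ f_b (r, m) = 1 ∧ f_c (m, n) = 0
      ∨ f_a (n, r) = 0 ∧ f_b (r, m) = 0 ∧ f_c (m, n) = 1 := by
    intro m n r
    have ht : (f_a (n, r), f_b (r, m), f_c (m, n)) ∈
        Set.range (fun t : μ × ν × ρ =>
          (f_a (t.2.1, t.2.2), f_b (t.2.2, t.1), f_c (t.1, t.2.1))) :=
      ⟨(m, n, r), rfl⟩
    rw [h] at ht
    simpa [Set.mem_insert_iff, Prod.ext_iff] using ht
  have h1 : ((1 : Fin 2), (0 : Fin 2), (0 : Fin 2)) ∈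
      Set.range (fun t : μ × ν × ρ =>
        (f_a (t.2.1, t.2.2), f_b (t.2.2, t.1), f_c (t.1, t.2.1))) := by
    rw [h]; simp
  have h2 : ((0 : Fin 2), (1 : Fin 2), (0 : Fin 2)) ∈
      Set.range (fun t : μ × ν × ρ =>
        (f_a (t.2.1, t.2.2), f_b (t.2.2, t.1), f_c (t.1, t.2.1))) := by
    rw [h]; simp
  have h3 : ((0 : Fin 2), (0 : Fin 2), (1 : Fin 2)) ∈
      Set.range (fun t : μ × ν × ρ =>
        (f_a (t.2.1, t.2.2), f_b (t.2.2, t.1), f_c (t.1, t.2.1))) := by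
    rw [h]; simp
  obtain ⟨⟨m1, n1, r1⟩, e1⟩ := h1
  obtain ⟨⟨m2, n2, r2⟩, e2⟩ := h2
  obtain ⟨⟨m3, n3, r3⟩, e3⟩ := h3
  simp only [Prod.ext_iff] at e1 e2 e3
  obtain ⟨ea1, eb1, ec1⟩ := e1
  obtain ⟨ea2, eb2, ec2⟩ := e2
  obtain ⟨ea3, eb3, ec3⟩ := e3
  -- f_b (r1, m2) = 0
  have hb12 : f_b (r1, m2) = 0 := by
    rcases hS m2 n1 r1 with ⟨_, hb, _⟩ | ⟨ha, _, _⟩ | ⟨ha, _, _⟩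
    · exact hb
    · rw [ea1] at ha; exact absurd ha (by decide)
    · rw [ea1] at ha; exact absurd ha (by decide)
  -- f_b (r1, m3) = 0
  have hb13 : f_b (r1, m3) = 0 := by
    rcases hS m3 n1 r1 with ⟨_, hb, _⟩ | ⟨ha, _, _⟩ | ⟨ha, _, _⟩
    · exact hb
    · rw [ea1] at ha; exact absurd ha (by decide)
    · rw [ea1] at ha; exact absurd ha (by decide)
  -- f_a (n3, r1) = 0
  have ha31 : f_a (n3, r1) = 0 := by
    rcases hS m3 n3 r1 with ⟨_, _, hc⟩ | ⟨_, hb, _⟩ | ⟨ha, _, _⟩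
    · rw [ec3] at hc; exact absurd hc (by decide)
    · rw [hb13] at hb; exact absurd hb (by decide)
    · exact ha
  -- f_c (m2, n3) = 1
  have hc23 : f_c (m2, n3) = 1 := by
    rcases hS m2 n3 r1 with ⟨ha, _, _⟩ | ⟨_, hb, _⟩ | ⟨_, _, hc⟩
    · rw [ha31] at ha; exact absurd ha (by decide)
    · rw [hb12] at hb; exact absurd hb (by decide)
    · exact hc
  -- contradiction at (m2, n3, r2)
  rcases hS m2 n3 r2 with ⟨_, hb, _⟩ | ⟨_, _, hc⟩ | ⟨_, hb, _⟩
  · rw [eb2] at hb; exact absurd hb (by decide)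
  · rw [hc23] at hc; exact absurd hc (by decide)
  · rw [eb2] at hb; exact absurd hb (by decide)
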